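/- Let M be an mtt and t ∈ T_Δ a fixed output tree, with run, ρ, V, f defined from M and t as in the context. Let s_1,…,s_k ∈ T_Σ and a⃗ = (run(s_1),…,run(s_k)). Then for every tree r over Δ ∪ (Q × {x1,…,xk}) ∪ {y1,…,yn}, all trees t_1,…,t_n ∈ T_Δ, and v⃗ = (ρ(t_1),…,ρ(t_n)): { ρ(t'[y_1/t_1,…,y_n/t_n]) | t' ∈ ⟦r[x_1/s_1,…,x_k/s_k]⟧_IO } = { v' ∈ V | f_{v⃗,a⃗}(r, v') }. -/

import Mathlib

namespace MttF

/-- Finite ordered trees over a label type `α`. -/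
inductive RTree (α : Type) : Type
  | node : α → List (RTree α) → RTree α

namespace RTree

variable {α β : Type}

/-- The root label of a tree. -/
def label : RTree α → α
  | node a _ => a

/-- The list of immediate subtrees of a tree. -/
def children : RTree α → List (RTree α)
  | node _ ts => ts

/-- Relabelling of trees. -/
def map (f : α → β) : RTree α → RTree β
  | node a ts => node (f a) (ts.attach.map (fun x => map f x.1))
decreasing_by
  have := List.sizeOf_lt_of_mem x.2
  simp only [node.sizeOf_spec]
  omega

/-- A tree is well-formed with respect to a rank function if every node labeled
by a rank-`k` symbol has exactly `k` children. `T_Σ` is the set of well-formed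
trees over `Σ`. -/
inductive Wf (rk : α → ℕ) : RTree α → Prop
  | node {a : α} {ts : List (RTree α)} :
      ts.length = rk a → (∀ t ∈ ts, Wf rk t) → Wf rk (node a ts)

/-- `Subtree u t` holds iff `u` is a subtree of `t` (rooted at some node of `t`). -/
inductive Subtree : RTree α → RTree α → Prop
  | refl (t : RTree α) : Subtree t t
  | step {u c : RTree α} {a : α} {ts : List (RTree α)} :
      c ∈ ts → Subtree u c → Subtree u (node a ts)

end RTree

/-- Labels for output trees with parameters: trees over `Δ ∪ Y`. -/
inductive OLab (Δ : Type) : Type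
  | out (d : Δ)
  | param (i : ℕ)

/-- Labels for right-hand sides of mtt rules: trees over `Δ ∪ (Q × X) ∪ Y`
(the second component of a call is the index of the input variable `x`). -/
inductive RLab (Δ Q : Type) : Type
  | out (d : Δ)
  | call (q : Q) (x : ℕ)
  | param (i : ℕ)

/-- Labels for "semantic" trees over `Δ ∪ (Q × T_Σ) ∪ Y`. -/
inductive SLab (Γ Δ Q : Type) : Type
  | out (d : Δ)
  | call (q : Q) (s : RTree Γ)
  | param (i : ℕ)

/-- Trees over `Δ ∪ Y`. -/
abbrev OT (Δ : Type) := RTree (OLab Δ)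
/-- Right-hand side trees over `Δ ∪ (Q × X) ∪ Y`. -/
abbrev Rhs (Δ Q : Type) := RTree (RLab Δ Q)
/-- Trees over `Δ ∪ (Q × T_Σ) ∪ Y`. -/
abbrev ST (Γ Δ Q : Type) := RTree (SLab Γ Δ Q)

/-- First-order substitution `x_i := ss_i` on a label of a right-hand side
(indices are 0-based; for well-formed rules the index is always in range). -/
def RLab.subst {Γ Δ Q : Type} (ss : List (RTree Γ)) : RLab Δ Q → SLab Γ Δ Q
  | .out d => .out d
  | .param i => .param i
  | .call q x =>
    match ss[x]? with
    | some s => .call q s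
    | none => .param x

/-- `r[x_1/s_1, …, x_k/s_k]`. -/
def substX {Γ Δ Q : Type} (ss : List (RTree Γ)) (r : Rhs Δ Q) : ST Γ Δ Q :=
  r.map (RLab.subst ss)

/-- Second-order (parameter) substitution `t[y_1/ts_1, …, y_n/ts_n]`
(`y` indices are 0-based). -/
def substY {Δ : Type} (ts : List (OT Δ)) : OT Δ → OT Δ
  | .node (.param i) _ => ts.getD i (.node (.param i) [])
  | .node (.out d) us => .node (.out d) (us.attach.map (fun x => substY ts x.1))
decreasing_by
  have := List.sizeOf_lt_of_mem x.2
  simp only [RTree.node.sizeOf_spec]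
  omega

/-- The embedding of `T_Δ` into the trees over `Δ ∪ Y`. -/
def embed {Δ : Type} (t : RTree Δ) : OT Δ := t.map OLab.out

variable {Γ Δ Q : Type}

/-- IO (call-by-value, inside-out) semantics: `SemIO rsel u t` holds iff
`t ∈ ⟦u⟧_IO`.  The rules of the transducer are given by a selector
`rsel q σ ss`: the set of right-hand sides of the `⟨q,σ⟩`-rules that are
applicable when the children of the current input node are `ss` (for a plain
mtt this does not depend on `ss`, cf. `plainSel`). -/
inductive SemIO (rsel : Q → Γ → List (RTree Γ) → Set (Rhs Δ Q)) :
    ST Γ Δ Q → OT Δ → Prop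
  | param (i : ℕ) :
      SemIO rsel (.node (.param i) []) (.node (.param i) [])
  | out {d : Δ} {us : List (ST Γ Δ Q)} {ts : List (OT Δ)}
      (hlen : ts.length = us.length)
      (h : ∀ i : Fin us.length, SemIO rsel (us.get i) (ts.get (i.cast hlen.symm))) :
      SemIO rsel (.node (.out d) us) (.node (.out d) ts)
  | call {q : Q} {σ : Γ} {ss : List (RTree Γ)} {us : List (ST Γ Δ Q)}
      {r : Rhs Δ Q} {t₀ : OT Δ} {ts : List (OT Δ)}
      (hr : r ∈ rsel q σ ss)
      (h₀ : SemIO rsel (substX ss r) t₀)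
      (hlen : ts.length = us.length)
      (h : ∀ i : Fin us.length, SemIO rsel (us.get i) (ts.get (i.cast hlen.symm))) :
      SemIO rsel (.node (.call q (.node σ ss)) us) (substY ts t₀)

mutual
/-- OI (call-by-name, outside-in) semantics: `SemOI rsel u t` holds iff
`t ∈ ⟦u⟧_OI`. -/
inductive SemOI (rsel : Q → Γ → List (RTree Γ) → Set (Rhs Δ Q)) :
    ST Γ Δ Q → OT Δ → Prop
  | param (i : ℕ) :
      SemOI rsel (.node (.param i) []) (.node (.param i) [])
  | out {d : Δ} {us : List (ST Γ Δ Q)} {ts : List (OT Δ)}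
      (hlen : ts.length = us.length)
      (h : ∀ i : Fin us.length, SemOI rsel (us.get i) (ts.get (i.cast hlen.symm))) :
      SemOI rsel (.node (.out d) us) (.node (.out d) ts)
  | call {q : Q} {σ : Γ} {ss : List (RTree Γ)} {us : List (ST Γ Δ Q)}
      {r : Rhs Δ Q} {t₀ : OT Δ} {t : OT Δ}
      (hr : r ∈ rsel q σ ss)
      (h₀ : SemOI rsel (substX ss r) t₀)
      (hs : OISub rsel us t₀ t) :
      SemOI rsel (.node (.call q (.node σ ss)) us) t

/-- OI-substitution: `OISub rsel us t₀ t` holds iff `t ∈ (t₀ ←_OI (⟦us_1⟧_OI, …, ⟦us_n⟧_OI))`,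
i.e. `t` is obtained from `t₀` by independently replacing every occurrence of a parameter
`y_i` by some member of `⟦us_i⟧_OI`. -/
inductive OISub (rsel : Q → Γ → List (RTree Γ) → Set (Rhs Δ Q)) :
    List (ST Γ Δ Q) → OT Δ → OT Δ → Prop
  | param {us : List (ST Γ Δ Q)} {i : ℕ} {t : OT Δ}
      (h : i < us.length) (hsem : SemOI rsel (us.get ⟨i, h⟩) t) :
      OISub rsel us (.node (.param i) []) t
  | out {us : List (ST Γ Δ Q)} {d : Δ} {ts ts' : List (OT Δ)}
      (hlen : ts'.length = ts.length)
      (h : ∀ i : Fin ts.length, OISub rsel us (ts.get i) (ts'.get (i.cast hlen.symm))) :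
      OISub rsel us (.node (.out d) ts) (.node (.out d) ts')
end

/-- The rule selector of a plain mtt: the applicable rules do not depend on the
child subtrees of the current input node. -/
def plainSel (rules : Q → Γ → Set (Rhs Δ Q)) :
    Q → Γ → List (RTree Γ) → Set (Rhs Δ Q) :=
  fun q σ _ => rules q σ

/-- The translation `τ_{IO,M} ⊆ T_Σ × T_Δ` realized in IO mode. -/
def tauIO (rankΓ : Γ → ℕ) (rankΔ : Δ → ℕ)
    (rsel : Q → Γ → List (RTree Γ) → Set (Rhs Δ Q)) (q₀ : Q) :
    Set (RTree Γ × RTree Δ) :=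
  {p | p.1.Wf rankΓ ∧ p.2.Wf rankΔ ∧
       SemIO rsel (.node (.call q₀ p.1) []) (embed p.2)}

/-- The translation `τ_{OI,M} ⊆ T_Σ × T_Δ` realized in OI mode. -/
def tauOI (rankΓ : Γ → ℕ) (rankΔ : Δ → ℕ)
    (rsel : Q → Γ → List (RTree Γ) → Set (Rhs Δ Q)) (q₀ : Q) :
    Set (RTree Γ × RTree Δ) :=
  {p | p.1.Wf rankΓ ∧ p.2.Wf rankΔ ∧
       SemOI rsel (.node (.call q₀ p.1) []) (embed p.2)}

/-- Well-formedness of a right-hand side of a rule of an mtt whose current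
input symbol has rank `k` and whose current state has rank `m`: output symbols
have the correct number of children, state calls `⟨q', x_i⟩` have `rank q'`
children and `i < k`, and parameters `y_j` satisfy `j < m`. -/
inductive RhsWf (rankΔ : Δ → ℕ) (rankQ : Q → ℕ) (k m : ℕ) : Rhs Δ Q → Prop
  | out {d : Δ} {ts : List (Rhs Δ Q)}
      (hlen : ts.length = rankΔ d) (h : ∀ t ∈ ts, RhsWf rankΔ rankQ k m t) :
      RhsWf rankΔ rankQ k m (.node (.out d) ts)
  | call {q : Q} {x : ℕ} {ts : List (Rhs Δ Q)}
      (hx : x < k) (hlen : ts.length = rankQ q)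
      (h : ∀ t ∈ ts, RhsWf rankΔ rankQ k m t) :
      RhsWf rankΔ rankQ k m (.node (.call q x) ts)
  | param {i : ℕ} (hi : i < m) : RhsWf rankΔ rankQ k m (.node (.param i) [])

/-- Well-formedness of a tree over `Δ ∪ (Q × T_Σ) ∪ Y`. -/
inductive STWf (rankΓ : Γ → ℕ) (rankΔ : Δ → ℕ) (rankQ : Q → ℕ) : ST Γ Δ Q → Prop
  | out {d : Δ} {ts : List (ST Γ Δ Q)}
      (hlen : ts.length = rankΔ d) (h : ∀ t ∈ ts, STWf rankΓ rankΔ rankQ t) :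
      STWf rankΓ rankΔ rankQ (.node (.out d) ts)
  | call {q : Q} {s : RTree Γ} {ts : List (ST Γ Δ Q)}
      (hs : s.Wf rankΓ) (hlen : ts.length = rankQ q)
      (h : ∀ t ∈ ts, STWf rankΓ rankΔ rankQ t) :
      STWf rankΓ rankΔ rankQ (.node (.call q s) ts)
  | param (i : ℕ) : STWf rankΓ rankΔ rankQ (.node (.param i) [])

/-- A tree over `Δ ∪ (Q × T_Σ) ∪ Y` is parameter-free if no `y_i` occurs in it. -/
inductive NoParam : ST Γ Δ Q → Prop
  | node {l : SLab Γ Δ Q} {ts : List (ST Γ Δ Q)}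
      (hl : ∀ i : ℕ, l ≠ .param i) (h : ∀ t ∈ ts, NoParam t) :
      NoParam (.node l ts)

/-- A macro tree transducer `M = (Q, Σ, Δ, q₀, R)`.  The alphabets `Γ` (input),
`Δ` (output) and the set `Q` of states are ranked; `q₀` has rank `0`; `rules q σ`
is the (finite) set `R_{q,σ}` of right-hand sides of the `⟨q,σ⟩`-rules, and every
right-hand side is a well-formed tree over `Δ ∪ (Q × X_k) ∪ Y_m`. -/
structure MTT (Γ Δ Q : Type) where
  rankΓ : Γ → ℕ
  rankΔ : Δ → ℕ
  rankQ : Q → ℕ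
  q₀ : Q
  q₀_rank : rankQ q₀ = 0
  rules : Q → Γ → Set (Rhs Δ Q)
  rules_fin : ∀ q σ, (rules q σ).Finite
  rules_wf : ∀ q σ, ∀ r ∈ rules q σ, RhsWf rankΔ rankQ (rankΓ σ) (rankQ q) r

/-- The rule selector of a plain mtt. -/
def MTT.sel (M : MTT Γ Δ Q) : Q → Γ → List (RTree Γ) → Set (Rhs Δ Q) :=
  plainSel M.rules

end MttF
namespace MttF

/-- The set `V = V_t ∪ {⊥}`: `some w` stands for the subtree `w` of the fixed
output tree `t`, and `none` stands for `⊥`. -/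
abbrev V (Δ : Type) := Option (RTree Δ)

/-- Triples `(q, v⃗, v') ∈ ⋃_i Q^{(i)} × V^i × V`. -/
abbrev Trip (Δ Q : Type) := Q × List (V Δ) × V Δ

/-- `v` is a legitimate element of `V = V_t ∪ {⊥}` (for `some w`, `w` must be a
subtree of `t`). -/
def InV {Δ : Type} (t : RTree Δ) : V Δ → Prop
  | none => True
  | some w => RTree.Subtree w t

/-- `rhoRel t t' v` holds iff `ρ(t') = v`, where `ρ(t') = t'` if `t'` is a
subtree of `t` and `ρ(t') = ⊥` otherwise (here `t'` ranges over trees over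
`Δ ∪ Y`, and subtrees of `t` are compared via the embedding of `T_Δ`). -/
def rhoRel {Δ : Type} (t : RTree Δ) (t' : OT Δ) : V Δ → Prop
  | some w => RTree.Subtree w t ∧ embed w = t'
  | none => ¬ ∃ w : RTree Δ, RTree.Subtree w t ∧ embed w = t'

/-- `ρ(T)` for a set `T` of output trees. -/
def rhoImg {Δ : Type} (t : RTree Δ) (T : Set (OT Δ)) : Set (V Δ) :=
  {v | ∃ t' ∈ T, rhoRel t t' v}

/-- The predicate `f_{v⃗,a⃗}(r, v')` of the inverse-type construction for
IO-mtts, for the fixed output tree `t`. -/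
inductive FPred {Δ Q : Type} (t : RTree Δ) (vs : List (V Δ))
    (aenv : List (Set (Trip Δ Q))) : Rhs Δ Q → V Δ → Prop
  | param {i : ℕ} {v : V Δ} (h : vs[i]? = some v) :
      FPred t vs aenv (.node (.param i) []) v
  | outSome {d : Δ} {rs : List (Rhs Δ Q)} {w : RTree Δ}
      (hw : RTree.Subtree w t) (hl : w.label = d)
      (h : ∀ i : Fin rs.length, FPred t vs aenv (rs.get i) w.children[i.val]?) :
      FPred t vs aenv (.node (.out d) rs) (some w)
  | outNone {d : Δ} {rs : List (Rhs Δ Q)} (us : List (V Δ))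
      (hlen : us.length = rs.length)
      (hus : ∀ u ∈ us, InV t u)
      (h : ∀ i : Fin rs.length, FPred t vs aenv (rs.get i) (us.get (i.cast hlen.symm)))
      (hno : ¬ ∃ w : RTree Δ, RTree.Subtree w t ∧ w.label = d ∧
          ∀ i : Fin rs.length, w.children[i.val]? = us.get (i.cast hlen.symm)) :
      FPred t vs aenv (.node (.out d) rs) none
  | call {q' : Q} {x : ℕ} {rs : List (Rhs Δ Q)} {v : V Δ} (us : List (V Δ))
      (hlen : us.length = rs.length)
      (ha : (q', us, v) ∈ aenv.getD x ∅)
      (h : ∀ i : Fin rs.length, FPred t vs aenv (rs.get i) (us.get (i.cast hlen.symm))) :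
      FPred t vs aenv (.node (.call q' x) rs) v

/-- The run `run(s)` of the (on-the-fly constructed) inverse-type automaton of
an IO-mtt on the input tree `s`, for the fixed output tree `t`:
`run(σ(s_1,…,s_k)) = {(q, v⃗, v') | ∃ r ∈ R_{q,σ}: f_{v⃗,(run(s_1),…,run(s_k))}(r, v')}`. -/
def runIO {Γ Δ Q : Type} (rankQ : Q → ℕ)
    (rsel : Q → Γ → List (RTree Γ) → Set (Rhs Δ Q)) (t : RTree Δ) :
    RTree Γ → Set (Trip Δ Q)
  | .node σ ss =>
      {trip | trip.2.1.length = rankQ trip.1 ∧ (∀ v ∈ trip.2.1, InV t v) ∧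
        InV t trip.2.2 ∧
        ∃ r ∈ rsel trip.1 σ ss,
          FPred t trip.2.1 (ss.attach.map (fun x => runIO rankQ rsel t x.1)) r trip.2.2}
decreasing_by
  have := List.sizeOf_lt_of_mem x.2
  simp only [RTree.node.sizeOf_spec]
  omega

end MttF

namespace MttF

open Classical in
/-- The function `ρ : T_Δ → V`: `ρ(t') = t'` if `t'` is a subtree of `t`,
and `ρ(t') = ⊥` otherwise. -/
noncomputable def rhoFun {Δ : Type} (t : RTree Δ) (t' : RTree Δ) : V Δ :=
  if RTree.Subtree t' t then some t' else none


section Aux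

variable {Γ Δ Q : Type}

/-- Custom induction principle for `RTree`. -/
theorem RTree.ind {α : Type} {P : RTree α → Prop}
    (H : ∀ a ts, (∀ c ∈ ts, P c) → P (RTree.node a ts)) : ∀ u, P u
  | .node a ts => H a ts (fun c hc => RTree.ind H c)
decreasing_by
  have := List.sizeOf_lt_of_mem hc
  simp only [RTree.node.sizeOf_spec]
  omega

theorem RTree.map_node {α β : Type} (f : α → β) (a : α) (ts : List (RTree α)) :
    RTree.map f (.node a ts) = .node (f a) (ts.map (RTree.map f)) := by
  rw [RTree.map]
  simp [List.attach_map_val]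

theorem embed_node {a : Δ} {ts : List (RTree Δ)} :
    embed (.node a ts) = .node (.out a) (ts.map embed) := by
  simp only [embed, RTree.map_node]; rfl

theorem embed_inj : ∀ (u v : RTree Δ), embed u = embed v → u = v := by
  have key : ∀ u : RTree Δ, ∀ v, embed u = embed v → u = v := by
    intro u
    induction u using RTree.ind with
    | H a ts IH =>
      rintro ⟨b, us⟩ h
      rw [embed_node, embed_node, RTree.node.injEq] at h
      obtain ⟨h1, h2⟩ := h
      cases h1
      have : ts = us := by
        induction ts generalizing us with
        | nil => cases us <;> simp_all
        | cons c cs ihc =>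
          cases us with
          | nil => simp at h2
          | cons d ds =>
            simp only [List.map_cons, List.cons.injEq] at h2
            have := IH c (by simp) d h2.1
            subst this
            rw [ihc (fun c hc => IH c (by simp [hc])) ds h2.2]
      rw [this]
  exact key

theorem subtree_trans {u v w : RTree Δ} (h1 : RTree.Subtree u v)
    (h2 : RTree.Subtree v w) : RTree.Subtree u w := by
  induction h2 with
  | refl => exact h1
  | step hmem _ ih => exact RTree.Subtree.step hmem ih

theorem subtree_of_child {c : RTree Δ} {a : Δ} {ts : List (RTree Δ)}
    (h : c ∈ ts) : RTree.Subtree c (.node a ts) :=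
  RTree.Subtree.step h (.refl c)

theorem sizeOf_le_of_subtree {u v : RTree Δ} (h : RTree.Subtree u v) :
    sizeOf u ≤ sizeOf v := by
  induction h with
  | refl => exact le_refl _
  | step hmem _ ih =>
    have := List.sizeOf_lt_of_mem hmem
    simp only [RTree.node.sizeOf_spec]
    omega

theorem not_subtree_grow (a : Δ) (t : RTree Δ) :
    ¬ RTree.Subtree (RTree.node a [t]) t := by
  intro h
  have := sizeOf_le_of_subtree h
  simp only [RTree.node.sizeOf_spec, List.cons.sizeOf_spec, List.nil.sizeOf_spec] at this
  omega

theorem wf_of_subtree {rk : Δ → ℕ} {u t : RTree Δ} (h : RTree.Subtree u t)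
    (ht : t.Wf rk) : u.Wf rk := by
  induction h with
  | refl => exact ht
  | step hmem _ ih =>
    cases ht with
    | node _ h2 => exact ih (h2 _ hmem)


theorem substY_param (ts : List (OT Δ)) (i : ℕ) (us : List (OT Δ)) :
    substY ts (.node (.param i) us) = ts.getD i (.node (.param i) []) := by
  rw [substY]

theorem substY_out (ts : List (OT Δ)) (d : Δ) (us : List (OT Δ)) :
    substY ts (.node (.out d) us) = .node (.out d) (us.map (substY ts)) := by
  rw [substY]; simp [List.attach_map_val]

theorem substX_node (ss : List (RTree Γ)) (l : RLab Δ Q) (rs : List (Rhs Δ Q)) :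
    substX ss (.node l rs) = .node (l.subst ss) (rs.map (substX ss)) :=
  RTree.map_node _ _ _

open Classical in
noncomputable def rhoOT (t : RTree Δ) (u : OT Δ) : V Δ :=
  if h : ∃ w, RTree.Subtree w t ∧ embed w = u then some h.choose else none

theorem rhoOT_eq_some {t : RTree Δ} {u : OT Δ} {w : RTree Δ} :
    rhoOT t u = some w ↔ RTree.Subtree w t ∧ embed w = u := by
  constructor
  · intro h
    rw [rhoOT] at h
    split at h
    · rename_i hex
      obtain ⟨h1, h2⟩ := hex.choose_spec
      cases h
      exact ⟨h1, h2⟩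
    · cases h
  · rintro ⟨h1, h2⟩
    rw [rhoOT]
    have hex : ∃ w', RTree.Subtree w' t ∧ embed w' = u := ⟨w, h1, h2⟩
    rw [dif_pos hex]
    have hcw := embed_inj _ _ (hex.choose_spec.2.trans h2.symm)
    rw [hcw]

theorem rhoOT_eq_none {t : RTree Δ} {u : OT Δ} :
    rhoOT t u = none ↔ ¬ ∃ w, RTree.Subtree w t ∧ embed w = u := by
  rw [rhoOT]; split <;> simp_all

theorem rhoRel_iff {t : RTree Δ} {u : OT Δ} {v : V Δ} :
    rhoRel t u v ↔ rhoOT t u = v := by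
  cases v with
  | some w => simpa [rhoRel] using rhoOT_eq_some.symm
  | none => simpa [rhoRel] using rhoOT_eq_none.symm

theorem rhoOT_embed {t w : RTree Δ} (h : RTree.Subtree w t) :
    rhoOT t (embed w) = some w := rhoOT_eq_some.2 ⟨h, rfl⟩

theorem rhoFun_eq (t w : RTree Δ) : rhoFun t w = rhoOT t (embed w) := by
  rw [rhoFun]; split
  · exact (rhoOT_embed (by assumption)).symm
  · rename_i hns
    symm; rw [rhoOT_eq_none]
    rintro ⟨w', h1, h2⟩
    cases embed_inj _ _ h2
    exact hns h1

theorem inV_rhoOT (t : RTree Δ) (u : OT Δ) : InV t (rhoOT t u) := by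
  cases h : rhoOT t u with
  | none => trivial
  | some w => exact (rhoOT_eq_some.1 h).1

theorem embed_eq_out_iff {w : RTree Δ} {d : Δ} {xs : List (OT Δ)} :
    embed w = .node (.out d) xs ↔ ∃ cs, w = .node d cs ∧ xs = cs.map embed := by
  constructor
  · intro h
    obtain ⟨a, ts⟩ := w
    rw [embed_node] at h
    simp only [RTree.node.injEq, OLab.out.injEq] at h
    exact ⟨ts, by rw [h.1], h.2.symm⟩
  · rintro ⟨cs, rfl, rfl⟩; exact embed_node

theorem rhoOT_out_eq_some {t w : RTree Δ} {d : Δ} {xs : List (OT Δ)} :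
    rhoOT t (.node (.out d) xs) = some w ↔
      RTree.Subtree w t ∧ ∃ cs, w = .node d cs ∧ xs = cs.map embed := by
  rw [rhoOT_eq_some, embed_eq_out_iff]

theorem map_rhoOT_embed_inj {t : RTree Δ} : ∀ (cs : List (RTree Δ)) (ys : List (OT Δ)),
    (∀ c ∈ cs, RTree.Subtree c t) →
    (cs.map embed).map (rhoOT t) = ys.map (rhoOT t) → ys = cs.map embed := by
  intro cs
  induction cs with
  | nil => intro ys _ h; cases ys <;> simp_all
  | cons c cs' ih =>
    intro ys hcs h
    cases ys with
    | nil => simp at h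
    | cons y ys' =>
      simp only [List.map_cons, List.cons.injEq] at h ⊢
      obtain ⟨h1, h2⟩ := h
      rw [rhoOT_embed (hcs c (by simp))] at h1
      obtain ⟨-, hy⟩ := rhoOT_eq_some.1 h1.symm
      exact ⟨hy.symm, ih ys' (fun x hx => hcs x (by simp [hx])) h2⟩

theorem rhoOT_out_congr {t : RTree Δ} {d : Δ} {xs ys : List (OT Δ)}
    (h : xs.map (rhoOT t) = ys.map (rhoOT t)) :
    rhoOT t (.node (.out d) xs) = rhoOT t (.node (.out d) ys) := by
  have key : ∀ (xs ys : List (OT Δ)), xs.map (rhoOT t) = ys.map (rhoOT t) →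
      ∀ w, rhoOT t (.node (.out d) xs) = some w →
        rhoOT t (.node (.out d) ys) = some w := by
    intro xs ys h w hw
    rw [rhoOT_out_eq_some] at hw ⊢
    obtain ⟨hsub, cs, rfl, rfl⟩ := hw
    refine ⟨hsub, cs, rfl, ?_⟩
    exact map_rhoOT_embed_inj cs ys
      (fun c hc => subtree_trans (subtree_of_child hc) hsub) h
  cases hx : rhoOT t (.node (.out d) xs) with
  | some w => rw [key xs ys h w hx]
  | none =>
    cases hy : rhoOT t (.node (.out d) ys) with
    | none => rfl
    | some w => rw [key ys xs h.symm w hy] at hx; cases hx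

theorem rhoOT_substY_congr {t : RTree Δ} {as bs : List (OT Δ)}
    (hlen : as.length = bs.length) (h : as.map (rhoOT t) = bs.map (rhoOT t))
    (u : OT Δ) : rhoOT t (substY as u) = rhoOT t (substY bs u) := by
  induction u using RTree.ind with
  | H l cs IH =>
    cases l with
    | param i =>
      rw [substY_param, substY_param]
      by_cases hi : i < as.length
      · rw [List.getD_eq_getElem _ _ hi, List.getD_eq_getElem _ _ (hlen ▸ hi)]
        have h2 : (as.map (rhoOT t))[i]? = (bs.map (rhoOT t))[i]? := by rw [h]
        simp only [List.getElem?_map, List.getElem?_eq_getElem hi,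
          List.getElem?_eq_getElem (hlen ▸ hi), Option.map_some] at h2
        exact Option.some.inj h2
      · rw [List.getD_eq_default _ _ (by omega), List.getD_eq_default _ _ (by omega)]
    | out d =>
      rw [substY_out, substY_out]
      apply rhoOT_out_congr
      simp only [List.map_map]
      exact List.map_congr_left (fun c hc => IH c hc)

/-- Parameter indices of a tree over `Δ ∪ Y` are all `< m`. -/
inductive PB (m : ℕ) : OT Δ → Prop
  | out {d : Δ} {cs : List (OT Δ)} (h : ∀ c ∈ cs, PB m c) : PB m (.node (.out d) cs)
  | param {i : ℕ} {cs : List (OT Δ)} (hi : i < m) : PB m (.node (.param i) cs)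

theorem substY_substY {as bs : List (OT Δ)} : ∀ {u : OT Δ}, PB as.length u →
    substY bs (substY as u) = substY (as.map (substY bs)) u := by
  intro u
  induction u using RTree.ind with
  | H l cs IH =>
    intro h
    cases l with
    | param i =>
      have hi : i < as.length := by cases h with | param hi => exact hi
      rw [substY_param, substY_param, List.getD_eq_getElem _ _ hi,
        List.getD_eq_getElem _ _ (by simpa using hi)]
      simp [List.getElem_map]
    | out d =>
      have h' : ∀ c ∈ cs, PB as.length c := by cases h with | out h => exact h
      rw [substY_out, substY_out, substY_out]
      congr 1
      rw [List.map_map]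
      exact List.map_congr_left (fun c hc => IH c hc (h' c hc))

theorem pb_embed (m : ℕ) (w : RTree Δ) : PB m (embed w) := by
  induction w using RTree.ind with
  | H a ts IH =>
    rw [embed_node]
    exact PB.out (by rintro c hc; rw [List.mem_map] at hc
                     obtain ⟨x, hx, rfl⟩ := hc; exact IH x hx)

theorem pb_substY {m m' : ℕ} {as : List (OT Δ)} (hm : m ≤ as.length)
    (has : ∀ a ∈ as, PB m' a) : ∀ {u : OT Δ}, PB m u → PB m' (substY as u) := by
  intro u
  induction u using RTree.ind with
  | H l cs IH =>
    intro h
    cases l with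
    | param i =>
      have hi : i < m := by cases h with | param hi => exact hi
      rw [substY_param, List.getD_eq_getElem _ _ (by omega)]
      exact has _ (List.getElem_mem _)
    | out d =>
      have h' : ∀ c ∈ cs, PB m c := by cases h with | out h => exact h
      rw [substY_out]
      exact PB.out (by rintro c hc; rw [List.mem_map] at hc
                       obtain ⟨x, hx, rfl⟩ := hc; exact IH x hx (h' x hx))

theorem list_embed_surj {cs : List (OT Δ)} (h : ∀ c ∈ cs, ∃ w, embed w = c) :
    ∃ ws : List (RTree Δ), cs = ws.map embed := by
  induction cs with
  | nil => exact ⟨[], rfl⟩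
  | cons c cs' ih =>
    obtain ⟨w, hw⟩ := h c (by simp)
    obtain ⟨ws, hws⟩ := ih (fun x hx => h x (by simp [hx]))
    exact ⟨w :: ws, by simp [hw, ← hws]⟩

theorem pb_zero_embed : ∀ {u : OT Δ}, PB 0 u → ∃ w, embed w = u := by
  intro u
  induction u using RTree.ind with
  | H l cs IH =>
    intro h
    cases h with
    | param hi => omega
    | out h =>
      obtain ⟨ws, rfl⟩ := list_embed_surj (fun c hc => IH c hc (h c hc))
      exact ⟨.node _ ws, embed_node⟩


theorem subst_call {ss : List (RTree Γ)} {q : Q} {x : ℕ} (h : x < ss.length) :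
    RLab.subst (Δ := Δ) ss (.call q x) = .call q (ss[x]'h) := by
  simp [RLab.subst, List.getElem?_eq_getElem h]

/-- Good trees over `Δ ∪ (Q × T_Σ) ∪ Y`: parameters `< m`, calls have correct
arity and well-formed input trees. -/
inductive SGood (rankΓ : Γ → ℕ) (rankQ : Q → ℕ) (m : ℕ) : ST Γ Δ Q → Prop
  | out {d : Δ} {cs : List (ST Γ Δ Q)} (h : ∀ c ∈ cs, SGood rankΓ rankQ m c) :
      SGood rankΓ rankQ m (.node (.out d) cs)
  | call {q : Q} {s : RTree Γ} {cs : List (ST Γ Δ Q)} (hs : s.Wf rankΓ)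
      (hlen : cs.length = rankQ q) (h : ∀ c ∈ cs, SGood rankΓ rankQ m c) :
      SGood rankΓ rankQ m (.node (.call q s) cs)
  | param {i : ℕ} (hi : i < m) : SGood rankΓ rankQ m (.node (.param i) [])

theorem sgood_substX {rankΓ : Γ → ℕ} {rankΔ : Δ → ℕ} {rankQ : Q → ℕ}
    {k m : ℕ} {r : Rhs Δ Q} (hr : RhsWf rankΔ rankQ k m r)
    {ss : List (RTree Γ)} (hk : ss.length = k) (hss : ∀ s ∈ ss, s.Wf rankΓ) :
    SGood rankΓ rankQ m (substX ss r) := by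
  induction hr with
  | @out d ts hlen h ih =>
    rw [substX_node]
    exact SGood.out (by rintro c hc; rw [List.mem_map] at hc
                        obtain ⟨y, hy, rfl⟩ := hc; exact ih y hy)
  | @call q x ts hx hlen h ih =>
    rw [substX_node, subst_call (by omega : x < ss.length)]
    exact SGood.call (hss _ (List.getElem_mem _)) (by simpa using hlen)
      (by rintro c hc; rw [List.mem_map] at hc
          obtain ⟨y, hy, rfl⟩ := hc; exact ih y hy)
  | @param i hi =>
    rw [substX_node]
    exact SGood.param hi

theorem pb_of_semIO {M : MTT Γ Δ Q} {u : ST Γ Δ Q} {t' : OT Δ}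
    (hsem : SemIO M.sel u t') : ∀ {m : ℕ}, SGood M.rankΓ M.rankQ m u → PB m t' := by
  induction hsem with
  | param i => intro m hg; cases hg with | param hi => exact PB.param hi
  | @out d us ts hlen h ih =>
    intro m hg
    have hg' : ∀ c ∈ us, SGood M.rankΓ M.rankQ m c := by
      cases hg with | out h => exact h
    refine PB.out ?_
    intro c hc
    obtain ⟨j, rfl⟩ := List.mem_iff_get.1 hc
    exact ih (j.cast hlen) (hg' _ (List.get_mem _ _))
  | @call q σ ss us r t₀ ts hr h₀ hlen h ih₀ ih =>
    intro m hg
    cases hg with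
    | call hs hlenq hg =>
      have hpb0 : PB (M.rankQ q) t₀ := by
        cases hs with
        | node hsl hsc =>
          exact ih₀ (sgood_substX (M.rules_wf q σ r hr) hsl hsc)
      refine pb_substY (m := M.rankQ q) (by omega) ?_ hpb0
      intro a ha
      obtain ⟨j, rfl⟩ := List.mem_iff_get.1 ha
      exact ih (j.cast hlen) (hg _ (List.get_mem _ _))

theorem runIO_node {rankQ : Q → ℕ} {rsel : Q → Γ → List (RTree Γ) → Set (Rhs Δ Q)}
    {t : RTree Δ} {σ : Γ} {ss : List (RTree Γ)} :
    runIO rankQ rsel t (.node σ ss) =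
      {trip | trip.2.1.length = rankQ trip.1 ∧ (∀ v ∈ trip.2.1, InV t v) ∧
        InV t trip.2.2 ∧
        ∃ r ∈ rsel trip.1 σ ss,
          FPred t trip.2.1 (ss.map (runIO rankQ rsel t)) r trip.2.2} := by
  rw [runIO]; simp [List.attach_map_val]

theorem exists_list {α : Type} {m : ℕ} {P : Fin m → α → Prop} (h : ∀ i, ∃ x, P i x) :
    ∃ (l : List α) (hl : l.length = m), ∀ (i : ℕ) (hi : i < m), P ⟨i, hi⟩ (l[i]'(by omega)) := by
  refine ⟨List.ofFn (fun i => (h i).choose), List.length_ofFn, fun i hi => ?_⟩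
  rw [List.getElem_ofFn]
  exact (h ⟨i, hi⟩).choose_spec


theorem main_claim (M : MTT Γ Δ Q) (t : RTree Δ) (ht : t.Wf M.rankΔ) :
    ∀ (N : ℕ) (ss : List (RTree Γ)), sizeOf ss ≤ N →
      (∀ s ∈ ss, s.Wf M.rankΓ) →
      ∀ (n : ℕ) (r : Rhs Δ Q), RhsWf M.rankΔ M.rankQ ss.length n r →
      ∀ (tsub : List (RTree Δ)), tsub.length = n →
      ∀ v : V Δ,
        ((∃ t' : OT Δ, SemIO M.sel (substX ss r) t' ∧
            rhoOT t (substY (tsub.map embed) t') = v) ↔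
          FPred t (tsub.map (rhoFun t)) (ss.map (runIO M.rankQ M.sel t)) r v) := by
  intro N
  induction N using Nat.strong_induction_on with
  | _ N IHN =>
  intro ss hN hss n r hr
  induction hr with
  | @param i hi =>
    intro tsub hn v
    have hsub : substX ss (.node (.param i) []) = (.node (.param i) [] : ST Γ Δ Q) := by
      rw [substX_node]; rfl
    rw [hsub]
    have hi' : i < tsub.length := by omega
    have hiY : i < (tsub.map embed).length := by simpa using hi'
    constructor
    · rintro ⟨t', hsem, hrho⟩
      cases hsem
      rw [substY_param, List.getD_eq_getElem _ _ hiY, List.getElem_map] at hrho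
      refine FPred.param ?_
      rw [List.getElem?_map, List.getElem?_eq_getElem hi']
      rw [← hrho]
      simp [rhoFun_eq]
    · intro hf
      cases hf with
      | param h =>
        refine ⟨.node (.param i) [], SemIO.param i, ?_⟩
        rw [substY_param, List.getD_eq_getElem _ _ hiY, List.getElem_map]
        rw [List.getElem?_map, List.getElem?_eq_getElem hi'] at h
        simp only [Option.map_some] at h
        rw [← rhoFun_eq]
        exact Option.some.inj h
  | @out d rs hlen hwf IH =>
    intro tsub hn v
    have hsub : substX ss (.node (.out d) rs) =
        (.node (.out d) (rs.map (substX ss)) : ST Γ Δ Q) := by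
      rw [substX_node]; rfl
    rw [hsub]
    constructor
    · rintro ⟨t', hsem, hrho⟩
      cases hsem with
      | @out _ _ ts hlenT hpt =>
        rw [substY_out] at hrho
        have hts : ts.length = rs.length := by simpa using hlenT
        have hptE : ∀ (i : ℕ) (hi : i < rs.length),
            SemIO M.sel (substX ss (rs[i]'hi)) (ts[i]'(by omega)) := by
          intro i hi
          have h2 := hpt ⟨i, by simpa using hi⟩
          simpa using h2
        cases v with
        | some w =>
          obtain ⟨hsubw, cs, rfl, hcs⟩ := rhoOT_out_eq_some.1 hrho
          have hcl : cs.length = rs.length := by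
            have := congrArg List.length hcs; simp at this; omega
          refine FPred.outSome hsubw rfl ?_
          intro i
          have hi : i.val < rs.length := i.isLt
          rw [show (RTree.node d cs).children = cs from rfl,
            List.getElem?_eq_getElem (by omega : i.val < cs.length)]
          have hsy : substY (tsub.map embed) (ts[i.val]'(by omega)) =
              embed (cs[i.val]'(by omega)) := by
            have h3 := congrArg (fun l => l[i.val]?) hcs
            simp only [List.getElem?_map,
              List.getElem?_eq_getElem (show i.val < ts.length by omega),
              List.getElem?_eq_getElem (show i.val < cs.length by omega),
              Option.map_some] at h3
            exact Option.some.inj h3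
          have hcsub : RTree.Subtree (cs[i.val]'(by omega)) t :=
            subtree_trans (subtree_of_child (List.getElem_mem _)) hsubw
          have hF := (IH _ (List.getElem_mem hi) tsub hn (some (cs[i.val]'(by omega)))).1
            ⟨ts[i.val]'(by omega), hptE i.val hi, by rw [hsy]; exact rhoOT_embed hcsub⟩
          simpa using hF
        | none =>
          refine FPred.outNone
            (ts.map fun u => rhoOT t (substY (tsub.map embed) u))
            (by simpa using hts) ?_ ?_ ?_
          · intro u hu
            rw [List.mem_map] at hu
            obtain ⟨y, hy, rfl⟩ := hu
            exact inV_rhoOT t _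
          · intro i
            have hi : i.val < rs.length := i.isLt
            simp only [List.get_eq_getElem, List.getElem_map, Fin.coe_cast]
            exact (IH _ (List.getElem_mem hi) tsub hn _).1
              ⟨ts[i.val]'(by omega), hptE i.val hi, rfl⟩
          · rintro ⟨w, hsubw, hlab, hch⟩
            obtain ⟨a, cs⟩ := w
            rw [show (RTree.node a cs).label = a from rfl] at hlab
            subst hlab
            have hwwf := wf_of_subtree hsubw ht
            have hcsl : cs.length = rs.length := by
              cases hwwf with | node hl _ => omega
            have hmap : ts.map (substY (tsub.map embed)) = cs.map embed := by
              refine List.ext_getElem (by simp [hts, hcsl]) ?_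
              intro i h1 h2
              simp only [List.getElem_map]
              have h3 := hch ⟨i, by simp at h1; omega⟩
              rw [show (RTree.node a cs).children = cs from rfl,
                List.getElem?_eq_getElem (by simp at h2; omega : i < cs.length)] at h3
              simp only [List.get_eq_getElem, List.getElem_map, Fin.coe_cast] at h3
              exact (rhoOT_eq_some.1 h3.symm).2.symm
            have := rhoOT_out_eq_some.2 ⟨hsubw, cs, rfl, hmap⟩
            rw [hrho] at this
            cases this
    · intro hf
      cases hf with
      | @outSome _ _ w hsubw hlab hpt =>
        obtain ⟨a, cs⟩ := w
        rw [show (RTree.node a cs).label = a from rfl] at hlab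
        subst hlab
        have hwwf := wf_of_subtree hsubw ht
        have hcsl : cs.length = rs.length := by
          cases hwwf with | node hl _ => omega
        have hex : ∀ i : Fin rs.length, ∃ ti : OT Δ,
            SemIO M.sel (substX ss (rs[i.val]'i.isLt)) ti ∧
            rhoOT t (substY (tsub.map embed) ti) = some (cs[i.val]'(by omega)) := by
          intro i
          have h2 := hpt i
          rw [show (RTree.node a cs).children = cs from rfl,
            List.getElem?_eq_getElem (by omega : i.val < cs.length)] at h2
          have h3 := (IH _ (List.getElem_mem i.isLt) tsub hn _).2 h2
          simpa using h3
        obtain ⟨ts, hl, hts⟩ := exists_list hex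
        refine ⟨.node (.out a) ts, ?_, ?_⟩
        · refine SemIO.out (by simpa using hl) ?_
          intro i
          have hi : i.val < rs.length := by simpa using i.isLt
          simp only [List.get_eq_getElem, List.getElem_map, Fin.coe_cast]
          exact (hts i.val hi).1
        · rw [substY_out]
          refine rhoOT_out_eq_some.2 ⟨hsubw, cs, rfl, ?_⟩
          refine List.ext_getElem (by simp [hl, hcsl]) ?_
          intro i h1 h2
          simp only [List.getElem_map]
          have h3 := (hts i (by simp at h1; omega)).2
          exact (rhoOT_eq_some.1 h3).2.symm
      | outNone us hlenU hus hpt hno =>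
        have hex : ∀ i : Fin rs.length, ∃ ti : OT Δ,
            SemIO M.sel (substX ss (rs[i.val]'i.isLt)) ti ∧
            rhoOT t (substY (tsub.map embed) ti) = us[i.val]'(by omega) := by
          intro i
          have h2 := hpt i
          have h3 := (IH _ (List.getElem_mem i.isLt) tsub hn _).2 h2
          simp only [List.get_eq_getElem, Fin.coe_cast] at h3
          simpa using h3
        obtain ⟨ts, hl, hts⟩ := exists_list hex
        refine ⟨.node (.out d) ts, ?_, ?_⟩
        · refine SemIO.out (by simpa using hl) ?_
          intro i
          have hi : i.val < rs.length := by simpa using i.isLt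
          simp only [List.get_eq_getElem, List.getElem_map, Fin.coe_cast]
          exact (hts i.val hi).1
        · rw [substY_out]
          rcases hv : rhoOT t (.node (.out d) (ts.map (substY (tsub.map embed)))) with _ | w
          · rfl
          · exfalso
            obtain ⟨hsubw, cs, hw, hcs⟩ := rhoOT_out_eq_some.1 hv
            have hcsl : cs.length = rs.length := by
              have := congrArg List.length hcs; simp at this; omega
            refine hno ⟨.node d cs, hw ▸ hsubw, rfl, ?_⟩
            intro i
            have hi : i.val < rs.length := i.isLt
            rw [show (RTree.node d cs).children = cs from rfl,
              List.getElem?_eq_getElem (by omega : i.val < cs.length)]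
            simp only [List.get_eq_getElem, Fin.coe_cast]
            have h4 := (hts i.val hi).2
            have h5 : substY (tsub.map embed) (ts[i.val]'(by omega)) =
                embed (cs[i.val]'(by omega)) := by
              have h6 := congrArg (fun l => l[i.val]?) hcs
              simp only [List.getElem?_map,
                List.getElem?_eq_getElem (show i.val < ts.length by omega),
                List.getElem?_eq_getElem (show i.val < cs.length by omega),
                Option.map_some] at h6
              exact Option.some.inj h6
            rw [← h4, h5, rhoOT_embed
              (subtree_trans (subtree_of_child (List.getElem_mem _)) (hw ▸ hsubw))]
  | @call q x rs hx hlen hwf IH =>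
    intro tsub hn v
    rcases hgx : ss[x]'hx with ⟨σ, ss'⟩
    have hwfx : (RTree.node σ ss').Wf M.rankΓ := hgx ▸ hss _ (List.getElem_mem hx)
    obtain ⟨hlx, hwfc⟩ : ss'.length = M.rankΓ σ ∧ ∀ s ∈ ss', s.Wf M.rankΓ := by
      cases hwfx with | node h1 h2 => exact ⟨h1, h2⟩
    have hsub : substX ss (.node (.call q x) rs) =
        (.node (.call q (.node σ ss')) (rs.map (substX ss)) : ST Γ Δ Q) := by
      rw [substX_node, subst_call hx, hgx]
    rw [hsub]
    have haenv : (ss.map (runIO M.rankQ M.sel t)).getD x ∅ =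
        runIO M.rankQ M.sel t (.node σ ss') := by
      rw [List.getD_eq_getElem _ _ (by simpa using hx), List.getElem_map, hgx]
    have hNlt : sizeOf ss' < N := by
      have h1 : sizeOf (ss[x]'hx) < sizeOf ss := List.sizeOf_lt_of_mem (List.getElem_mem hx)
      rw [hgx] at h1
      simp only [RTree.node.sizeOf_spec] at h1
      omega
    have hrules : ∀ r' ∈ M.sel q σ ss',
        RhsWf M.rankΔ M.rankQ ss'.length (M.rankQ q) r' := by
      intro r' hr'
      have h2 := M.rules_wf q σ r' hr'
      rw [hlx]
      exact h2
    constructor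
    · rintro ⟨t', hsem, hrho⟩
      cases hsem with
      | @call _ _ _ _ r' t₀ ts hr' h₀ hlenT hpt =>
        have hts : ts.length = rs.length := by simpa using hlenT
        have hr'wf := hrules r' hr'
        have hpb0 : PB (M.rankQ q) t₀ := pb_of_semIO h₀ (sgood_substX hr'wf rfl hwfc)
        have hptE : ∀ (i : ℕ) (hi : i < rs.length),
            SemIO M.sel (substX ss (rs[i]'hi)) (ts[i]'(by omega)) := by
          intro i hi
          have h2 := hpt ⟨i, by simpa using hi⟩
          simpa using h2
        have hpbts : ∀ (i : ℕ) (hi : i < rs.length), PB n (ts[i]'(by omega)) := by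
          intro i hi
          exact pb_of_semIO (hptE i hi) (sgood_substX (hwf _ (List.getElem_mem hi)) rfl hss)
        rw [substY_substY (by rw [hts, hlen]; exact hpb0)] at hrho
        have hfree : ∀ c ∈ ts.map (substY (tsub.map embed)), PB 0 c := by
          intro c hc
          rw [List.mem_map] at hc
          obtain ⟨y, hy, rfl⟩ := hc
          obtain ⟨j, rfl⟩ := List.mem_iff_get.1 hy
          exact pb_substY (m := n) (by simp [hn]) (fun a ha => by
            rw [List.mem_map] at ha; obtain ⟨w0, _, rfl⟩ := ha; exact pb_embed 0 w0)
            (hpbts j.val (by have := j.isLt; omega))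
        obtain ⟨ws, hws⟩ := list_embed_surj (fun c hc => pb_zero_embed (hfree c hc))
        have hwsl : ws.length = M.rankQ q := by
          have := congrArg List.length hws; simp at this; omega
        have hIHo := IHN (sizeOf ss') hNlt ss' le_rfl hwfc (M.rankQ q) r' hr'wf ws hwsl v
        have hfp' := hIHo.1 ⟨t₀, h₀, by rw [← hws]; exact hrho⟩
        refine FPred.call (ws.map (rhoFun t)) (by simp; omega) ?_ ?_
        · rw [haenv, runIO_node]
          simp only [Set.mem_setOf_eq]
          refine ⟨by simp [hwsl], ?_, ?_, r', hr', hfp'⟩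
          · intro v' hv'
            rw [List.mem_map] at hv'
            obtain ⟨w0, _, rfl⟩ := hv'
            rw [rhoFun_eq]
            exact inV_rhoOT t _
          · rw [← hrho]; exact inV_rhoOT t _
        · intro i
          have hi : i.val < rs.length := i.isLt
          simp only [List.get_eq_getElem, List.getElem_map, Fin.coe_cast]
          have h5 : substY (tsub.map embed) (ts[i.val]'(by omega)) =
              embed (ws[i.val]'(by omega)) := by
            have h6 := congrArg (fun l => l[i.val]?) hws
            simp only [List.getElem?_map,
              List.getElem?_eq_getElem (show i.val < ts.length by omega),
              List.getElem?_eq_getElem (show i.val < ws.length by omega),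
              Option.map_some] at h6
            exact Option.some.inj h6
          refine (IH _ (List.getElem_mem hi) tsub hn _).1
            ⟨ts[i.val]'(by omega), hptE i.val hi, ?_⟩
          rw [h5, ← rhoFun_eq]
    · intro hf
      cases hf with
      | call us hlenU ha hpt =>
        rw [haenv, runIO_node] at ha
        simp only [Set.mem_setOf_eq] at ha
        obtain ⟨hul, hInV, hInVv, r', hr', hfp'⟩ := ha
        have hr'wf := hrules r' hr'
        obtain ⟨ws, husw⟩ : ∃ ws : List (RTree Δ), us = ws.map (rhoFun t) := by
          refine ⟨us.map (fun u => u.getD (.node t.label [t])), ?_⟩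
          rw [List.map_map]
          symm
          have hpt2 : ∀ u ∈ us,
              (rhoFun t ∘ fun u => u.getD (RTree.node t.label [t])) u = id u := by
            intro u hu
            cases u with
            | some w =>
              simp only [Function.comp_apply, Option.getD_some, id_eq]
              rw [rhoFun]
              exact if_pos (hInV _ hu)
            | none =>
              simp only [Function.comp_apply, Option.getD_none, id_eq]
              rw [rhoFun]
              exact if_neg (not_subtree_grow _ _)
          rw [List.map_congr_left hpt2, List.map_id]
        have hwsl : ws.length = M.rankQ q := by
          have := congrArg List.length husw; simp at this; omega
        obtain ⟨t₀, h₀, hrho₀⟩ :=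
          (IHN (sizeOf ss') hNlt ss' le_rfl hwfc (M.rankQ q) r' hr'wf ws hwsl v).2
            (by rw [← husw]; exact hfp')
        have hex : ∀ i : Fin rs.length, ∃ ti : OT Δ,
            SemIO M.sel (substX ss (rs[i.val]'i.isLt)) ti ∧
            rhoOT t (substY (tsub.map embed) ti) = us[i.val]'(by omega) := by
          intro i
          have h2 := hpt i
          have h3 := (IH _ (List.getElem_mem i.isLt) tsub hn _).2 h2
          simp only [List.get_eq_getElem, Fin.coe_cast] at h3
          simpa using h3
        obtain ⟨ts, hl, hts⟩ := exists_list hex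
        have hpbts : ∀ (i : ℕ) (hi : i < rs.length), PB n (ts[i]'(by omega)) := fun i hi =>
          pb_of_semIO (hts i hi).1 (sgood_substX (hwf _ (List.getElem_mem hi)) rfl hss)
        have hpb0 : PB (M.rankQ q) t₀ := pb_of_semIO h₀ (sgood_substX hr'wf rfl hwfc)
        refine ⟨substY ts t₀, ?_, ?_⟩
        · refine SemIO.call hr' h₀ (by simpa using hl) ?_
          intro i
          have hi : i.val < rs.length := by simpa using i.isLt
          simp only [List.get_eq_getElem, List.getElem_map, Fin.coe_cast]
          exact (hts i.val hi).1
        · rw [substY_substY (by rw [hl, hlen]; exact hpb0)]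
          have hmaps : (ts.map (substY (tsub.map embed))).map (rhoOT t) =
              (ws.map embed).map (rhoOT t) := by
            refine List.ext_getElem (by simp; omega) ?_
            intro i h1 h2
            have hi : i < rs.length := by simp at h1; omega
            simp only [List.getElem_map]
            have hL := (hts i hi).2
            have hR : rhoFun t (ws[i]'(by omega)) = us[i]'(by omega) := by
              have h6 := congrArg (fun l => l[i]?) husw
              simp only [List.getElem?_map,
                List.getElem?_eq_getElem (show i < us.length by omega),
                List.getElem?_eq_getElem (show i < ws.length by omega),
                Option.map_some] at h6
              exact (Option.some.inj h6).symm
            rw [hL, ← rhoFun_eq, hR]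
          rw [rhoOT_substY_congr (by simp; omega) hmaps t₀]
          exact hrho₀

end Aux

/-- the inner claim for the inverse-type construction for IO-mtts.
For `a⃗ = (run(s_1),…,run(s_k))`, every right-hand-side tree `r` over
`Δ ∪ (Q × {x_1,…,x_k}) ∪ {y_1,…,y_n}`, all `t_1,…,t_n ∈ T_Δ`, and
`v⃗ = (ρ(t_1),…,ρ(t_n))`:
`{ρ(t'[y⃗/t⃗]) | t' ∈ ⟦r[x⃗/s⃗]⟧_IO} = {v' | f_{v⃗,a⃗}(r, v')}`. -/
theorem fpred_claim {Γ Δ Q : Type} [Fintype Γ] [Fintype Δ] [Fintype Q]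
    (M : MTT Γ Δ Q) (t : RTree Δ) (ht : t.Wf M.rankΔ)
    (k n : ℕ) (ss : List (RTree Γ)) (hk : ss.length = k)
    (hss : ∀ s ∈ ss, s.Wf M.rankΓ)
    (r : Rhs Δ Q) (hr : RhsWf M.rankΔ M.rankQ k n r)
    (tsub : List (RTree Δ)) (hn : tsub.length = n)
    (htsub : ∀ w ∈ tsub, w.Wf M.rankΔ) :
    {v | ∃ t' : OT Δ, SemIO M.sel (substX ss r) t' ∧
        rhoRel t (substY (tsub.map embed) t') v} =
      {v | FPred t (tsub.map (rhoFun t)) (ss.map (runIO M.rankQ M.sel t)) r v} := by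
  subst hk
  ext v
  simp only [Set.mem_setOf_eq]
  have hmain := main_claim M t ht (sizeOf ss) ss le_rfl hss n r hr tsub hn v
  constructor
  · rintro ⟨t', h1, h2⟩
    exact hmain.1 ⟨t', h1, rhoRel_iff.1 h2⟩
  · intro h
    obtain ⟨t', h1, h2⟩ := hmain.2 h
    exact ⟨t', h1, rhoRel_iff.2 h2⟩

end MttF
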